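/- Let K be a field, n ≥ 2 and 1 ≤ d ≤ n−1. The ideal of K[a_{11}, …, a_{nn}] generated by the d×d minors of the small Kalman matrix of the generic n×n matrix A equals the ideal I_{d,n} generated by the d×d minors of the reduced Kalman matrix of A; that is, substituting A12 = 0 and A22 = 0 in the small Kalman matrix does not change the ideal generated by its maximal minors. -/
import Mathlib


open Matrix MvPolynomial

/-- The small Kalman matrix of `A`: the `d(n-d) × d` matrix obtained by vertically stacking the
blocks `[A^i]` for `i = 1, …, d`, where `[M]` is the submatrix of `M` formed by the last `n - d`
rows and the first `d` columns. -/
noncomputable def smallKalman {R : Type*} [CommRing R] {n d : ℕ} (hdn : d ≤ n)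
    (A : Matrix (Fin n) (Fin n) R) : Matrix (Fin d × Fin (n - d)) (Fin d) R :=
  fun p j =>
    (A ^ ((p.1 : ℕ) + 1)) ⟨d + (p.2 : ℕ), by have := p.2.isLt; omega⟩
      ⟨(j : ℕ), by have := j.isLt; omega⟩

/-- The reduced Kalman matrix built from a `d × d` block `A11` and an `m × d` block `A21`: the
vertical stacking of the blocks `A21 * A11 ^ i` for `i = 0, 1, …, d - 1`. -/
noncomputable def reducedKalman {R : Type*} [CommRing R] {d m : ℕ}
    (A11 : Matrix (Fin d) (Fin d) R) (A21 : Matrix (Fin m) (Fin d) R) :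
    Matrix (Fin d × Fin m) (Fin d) R :=
  fun p j => (A21 * A11 ^ (p.1 : ℕ)) p.2 j

/-- The upper-left `d × d` block of an `n × n` matrix. -/
def blockUL {R : Type*} {n d : ℕ} (hdn : d ≤ n) (A : Matrix (Fin n) (Fin n) R) :
    Matrix (Fin d) (Fin d) R :=
  fun i j => A ⟨(i : ℕ), by have := i.isLt; omega⟩ ⟨(j : ℕ), by have := j.isLt; omega⟩

/-- The lower-left `(n-d) × d` block of an `n × n` matrix. -/
def blockLL {R : Type*} {n d : ℕ} (hdn : d ≤ n) (A : Matrix (Fin n) (Fin n) R) :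
    Matrix (Fin (n - d)) (Fin d) R :=
  fun i j => A ⟨d + (i : ℕ), by have := i.isLt; omega⟩ ⟨(j : ℕ), by have := j.isLt; omega⟩

/-- The generic `n × n` matrix whose entries are the variables of `K[a_{11}, …, a_{nn}]`. -/
noncomputable def genMatrix (K : Type*) [CommSemiring K] (n : ℕ) :
    Matrix (Fin n) (Fin n) (MvPolynomial (Fin n × Fin n) K) :=
  fun i j => X (i, j)

/-! ### Auxiliary material for the proof -/

/-- Baby Cauchy–Binet: any maximal minor of `C * N` lies in the ideal of maximal minors of `N`. -/
lemma det_mul_submatrix_mem {R : Type*} [CommRing R] {ι κ : Type*} [Fintype κ] {d : ℕ}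
    (C : Matrix ι κ R) (N : Matrix κ (Fin d) R) (r : Fin d → ι) :
    ((C * N).submatrix r id).det ∈
      Ideal.span (Set.range fun c : Fin d → κ => (N.submatrix c id).det) := by
  classical
  have h : ((C * N).submatrix r id) = fun i => ∑ k : κ, C (r i) k • N k := by
    ext i j
    simp [Matrix.mul_apply]
  rw [Matrix.det, h]
  rw [show (detRowAlternating (fun i => ∑ k : κ, C (r i) k • N k) : R)
      = (detRowAlternating : ((Fin d → R) [⋀^Fin d]→ₗ[R] R)).toMultilinearMap
          (fun i => ∑ k : κ, C (r i) k • N k) from rfl]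
  rw [MultilinearMap.map_sum]
  refine Ideal.sum_mem _ fun c _ => ?_
  rw [MultilinearMap.map_smul_univ, smul_eq_mul]
  exact Ideal.mul_mem_left _ _ (Ideal.subset_span ⟨c, rfl⟩)

section Abstract

open Finset

variable {R : Type*} [CommRing R] {d m : ℕ}

lemma mul_toBlocks₁₁' (M N : Matrix (Fin d ⊕ Fin m) (Fin d ⊕ Fin m) R) :
    (M * N).toBlocks₁₁
      = M.toBlocks₁₁ * N.toBlocks₁₁ + M.toBlocks₁₂ * N.toBlocks₂₁ := by
  conv_lhs => rw [← fromBlocks_toBlocks M, ← fromBlocks_toBlocks N, fromBlocks_multiply]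
  rfl

lemma mul_toBlocks₂₁' (M N : Matrix (Fin d ⊕ Fin m) (Fin d ⊕ Fin m) R) :
    (M * N).toBlocks₂₁
      = M.toBlocks₂₁ * N.toBlocks₁₁ + M.toBlocks₂₂ * N.toBlocks₂₁ := by
  conv_lhs => rw [← fromBlocks_toBlocks M, ← fromBlocks_toBlocks N, fromBlocks_multiply]
  rfl

lemma one_toBlocks₁₁' : (1 : Matrix (Fin d ⊕ Fin m) (Fin d ⊕ Fin m) R).toBlocks₁₁ = 1 := by
  ext i j; simp [toBlocks₁₁, one_apply, Sum.inl.injEq]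

lemma one_toBlocks₂₁' : (1 : Matrix (Fin d ⊕ Fin m) (Fin d ⊕ Fin m) R).toBlocks₂₁ = 0 := by
  ext i j; simp [toBlocks₂₁, one_apply]

variable (B : Matrix (Fin d ⊕ Fin m) (Fin d ⊕ Fin m) R)

lemma pow_toBlocks₁₁_closed (k : ℕ) :
    (B ^ k).toBlocks₁₁ = B.toBlocks₁₁ ^ k
      + ∑ j ∈ range k, B.toBlocks₁₁ ^ (k - 1 - j) * B.toBlocks₁₂ * (B ^ j).toBlocks₂₁ := by
  induction k with
  | zero => simp [pow_zero, one_toBlocks₁₁']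
  | succ k ih =>
      rw [pow_succ', mul_toBlocks₁₁', ih, sum_range_succ]
      rw [Matrix.mul_add, ← pow_succ']
      rw [Matrix.mul_sum]
      have h1 : ∀ j ∈ range k,
          B.toBlocks₁₁ * (B.toBlocks₁₁ ^ (k - 1 - j) * B.toBlocks₁₂ * (B ^ j).toBlocks₂₁)
          = B.toBlocks₁₁ ^ (k + 1 - 1 - j) * B.toBlocks₁₂ * (B ^ j).toBlocks₂₁ := by
        intro j hj
        rw [Finset.mem_range] at hj
        rw [← Matrix.mul_assoc, ← Matrix.mul_assoc, ← pow_succ']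
        congr 3
        omega
      rw [Finset.sum_congr rfl h1]
      have h2 : k + 1 - 1 - k = 0 := by omega
      simp only [h2, pow_zero, Matrix.one_mul]
      abel

/-- The key identity expressing `A21 * A11 ^ k` in terms of the lower-left blocks of powers. -/
lemma key_identity (k : ℕ) :
    B.toBlocks₂₁ * B.toBlocks₁₁ ^ k = (B ^ (k + 1)).toBlocks₂₁
      - B.toBlocks₂₂ * (B ^ k).toBlocks₂₁
      - ∑ j ∈ range k,
          B.toBlocks₂₁ * B.toBlocks₁₁ ^ (k - 1 - j) * B.toBlocks₁₂ * (B ^ j).toBlocks₂₁ := by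
  rw [pow_succ', mul_toBlocks₂₁', pow_toBlocks₁₁_closed, Matrix.mul_add, Matrix.mul_sum]
  simp only [← Matrix.mul_assoc]
  abel

/-- The matrix coefficients of the row operations relating the two Kalman matrices. -/
noncomputable def coefM (i t : ℕ) : Matrix (Fin m) (Fin m) R :=
  if t + 1 = i then B.toBlocks₂₂
  else if t + 2 ≤ i then B.toBlocks₂₁ * B.toBlocks₁₁ ^ (i - 2 - t) * B.toBlocks₁₂
  else 0

/-- The strictly block-lower-triangular matrix of row operations. -/
noncomputable def Lmat : Matrix (Fin d × Fin m) (Fin d × Fin m) R :=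
  fun p q => coefM B (p.1 : ℕ) (q.1 : ℕ) p.2 q.2

/-- The abstract small Kalman matrix (for a block-decomposed index type). -/
noncomputable def Smat : Matrix (Fin d × Fin m) (Fin d) R :=
  fun p j => (B ^ ((p.1 : ℕ) + 1)).toBlocks₂₁ p.2 j

lemma coefM_eq_zero {i t : ℕ} (h : i ≤ t) : coefM B i t = 0 := by
  unfold coefM
  rw [if_neg (by omega), if_neg (by omega)]

lemma main_step {i : ℕ} (hi : i < d) :
    B.toBlocks₂₁ * B.toBlocks₁₁ ^ i
      = (B ^ (i + 1)).toBlocks₂₁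
        - ∑ t ∈ range d, coefM B i t * (B ^ (t + 1)).toBlocks₂₁ := by
  have hshrink : ∑ t ∈ range d, coefM B i t * (B ^ (t + 1)).toBlocks₂₁
      = ∑ t ∈ range i, coefM B i t * (B ^ (t + 1)).toBlocks₂₁ := by
    refine (Finset.sum_subset (Finset.range_subset_range.mpr hi.le) fun t _ ht => ?_).symm
    rw [Finset.mem_range, not_lt] at ht
    rw [coefM_eq_zero B ht, Matrix.zero_mul]
  rw [hshrink]
  rcases Nat.eq_zero_or_eq_succ_pred i with h0 | hsucc
  · subst h0
    simp [key_identity B 0, pow_zero, one_toBlocks₂₁']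
  · set k := i - 1 with hk
    have hik : i = k + 1 := hsucc
    have hck : coefM B (k + 1) k = B.toBlocks₂₂ := by unfold coefM; rw [if_pos rfl]
    have hterms : ∀ t ∈ range k,
        coefM B (k + 1) t * (B ^ (t + 1)).toBlocks₂₁
          = B.toBlocks₂₁ * B.toBlocks₁₁ ^ (k + 1 - 1 - (t + 1)) * B.toBlocks₁₂
              * (B ^ (t + 1)).toBlocks₂₁ := by
      intro t ht
      rw [Finset.mem_range] at ht
      unfold coefM
      rw [if_neg (by omega), if_pos (by omega)]
      have hexp : k + 1 - 2 - t = k + 1 - 1 - (t + 1) := by omega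
      rw [hexp]
    have hsum : ∑ t ∈ range (k + 1), coefM B (k + 1) t * (B ^ (t + 1)).toBlocks₂₁
        = B.toBlocks₂₂ * (B ^ (k + 1)).toBlocks₂₁
          + ∑ j ∈ range (k + 1),
              B.toBlocks₂₁ * B.toBlocks₁₁ ^ (k + 1 - 1 - j) * B.toBlocks₁₂
                * (B ^ j).toBlocks₂₁ := by
      rw [Finset.sum_range_succ, hck, Finset.sum_congr rfl hterms,
        Finset.sum_range_succ' (fun j => B.toBlocks₂₁ * B.toBlocks₁₁ ^ (k + 1 - 1 - j)
          * B.toBlocks₁₂ * (B ^ j).toBlocks₂₁) k]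
      rw [pow_zero, one_toBlocks₂₁', Matrix.mul_zero]
      abel
    rw [hik, hsum, key_identity B (k + 1)]
    abel

/-- The reduced Kalman matrix is obtained from the small one by the row operations `1 - Lmat`. -/
lemma kalman_factorization :
    reducedKalman B.toBlocks₁₁ B.toBlocks₂₁ = (1 - Lmat B) * Smat B := by
  ext ⟨i, r⟩ j
  rw [Matrix.sub_mul, Matrix.one_mul, Matrix.sub_apply]
  have hLS : (Lmat B * Smat B) (i, r) j
      = (∑ t ∈ range d, coefM B (i : ℕ) t * (B ^ (t + 1)).toBlocks₂₁) r j := by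
    rw [Matrix.mul_apply, Fintype.sum_prod_type]
    rw [Matrix.sum_apply]
    rw [← Fin.sum_univ_eq_sum_range
      (fun t => (coefM B (i : ℕ) t * (B ^ (t + 1)).toBlocks₂₁) r j) d]
    refine Finset.sum_congr rfl fun t _ => ?_
    rw [Matrix.mul_apply]
    rfl
  rw [hLS]
  have := congrFun (congrFun (main_step B i.isLt) r) j
  rw [Matrix.sub_apply] at this
  exact this.symm ▸ rfl

lemma Lmat_pow_apply_eq_zero (k : ℕ) :
    ∀ p q : Fin d × Fin m, (p.1 : ℕ) < (q.1 : ℕ) + k → (Lmat B ^ k) p q = 0 := by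
  induction k with
  | zero =>
      intro p q hpq
      rw [pow_zero]
      have : p ≠ q := by
        intro h; rw [h] at hpq; omega
      exact Matrix.one_apply_ne this
  | succ k ih =>
      intro p q hpq
      rw [pow_succ, Matrix.mul_apply]
      refine Finset.sum_eq_zero fun q' _ => ?_
      rcases lt_or_ge (q.1 : ℕ) (q'.1 : ℕ) with h | h
      · rw [ih p q' (by omega), zero_mul]
      · have : Lmat B q' q = 0 := by
          show coefM B (q'.1 : ℕ) (q.1 : ℕ) q'.2 q.2 = 0
          rw [coefM_eq_zero B h]
          rfl
        rw [this, mul_zero]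

lemma Lmat_pow_d : Lmat B ^ d = 0 := by
  ext p q
  rw [Lmat_pow_apply_eq_zero B d p q (by have := p.1.isLt; omega)]
  rfl

lemma geom_inv : (∑ t ∈ range d, Lmat B ^ t) * (1 - Lmat B) = 1 := by
  have h := geom_sum_mul (Lmat B) d
  rw [Lmat_pow_d] at h
  have h2 : (∑ t ∈ range d, Lmat B ^ t) * (1 - Lmat B)
      = -((∑ t ∈ range d, Lmat B ^ t) * (Lmat B - 1)) := by
    rw [← mul_neg, neg_sub]
  rw [h2, h, zero_sub, neg_neg]

/-- The abstract version of the main theorem. -/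
theorem abstract_span_eq :
    Ideal.span (Set.range fun r : Fin d → Fin d × Fin m => ((Smat B).submatrix r id).det)
      = Ideal.span (Set.range fun r : Fin d → Fin d × Fin m =>
          ((reducedKalman B.toBlocks₁₁ B.toBlocks₂₁).submatrix r id).det) := by
  have hfac := kalman_factorization B
  have hS : Smat B = (∑ t ∈ range d, Lmat B ^ t) * reducedKalman B.toBlocks₁₁ B.toBlocks₂₁ := by
    rw [hfac, ← Matrix.mul_assoc, geom_inv, Matrix.one_mul]
  apply le_antisymm
  · rw [Ideal.span_le]
    rintro _ ⟨r, rfl⟩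
    rw [hS]
    exact det_mul_submatrix_mem _ _ r
  · rw [Ideal.span_le]
    rintro _ ⟨r, rfl⟩
    rw [hfac]
    exact det_mul_submatrix_mem _ _ r

end Abstract

section Transfer

variable {R : Type*} [CommRing R] {n d : ℕ}

/-- The reindexing equivalence splitting `Fin n` into the first `d` and the last `n - d`. -/
def eqvSplit (h : n = d + (n - d)) : Fin n ≃ Fin d ⊕ Fin (n - d) :=
  (finCongr h).trans finSumFinEquiv.symm

lemma eqvSplit_symm_inl (h : n = d + (n - d)) (hdn : d ≤ n) (j : Fin d) :
    (eqvSplit h).symm (Sum.inl j) = (⟨(j : ℕ), by have := j.isLt; omega⟩ : Fin n) := by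
  apply Fin.ext
  simp [eqvSplit]

lemma eqvSplit_symm_inr (h : n = d + (n - d)) (r : Fin (n - d)) :
    (eqvSplit h).symm (Sum.inr r) = (⟨d + (r : ℕ), by have := r.isLt; omega⟩ : Fin n) := by
  apply Fin.ext
  simp [eqvSplit]

lemma blockUL_eq (h : n = d + (n - d)) (hdn : d ≤ n) (A : Matrix (Fin n) (Fin n) R) :
    blockUL hdn A = (reindex (eqvSplit h) (eqvSplit h) A).toBlocks₁₁ := by
  ext i j
  show A _ _ = A ((eqvSplit h).symm (Sum.inl i)) ((eqvSplit h).symm (Sum.inl j))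
  rw [eqvSplit_symm_inl h hdn, eqvSplit_symm_inl h hdn]

lemma blockLL_eq (h : n = d + (n - d)) (hdn : d ≤ n) (A : Matrix (Fin n) (Fin n) R) :
    blockLL hdn A = (reindex (eqvSplit h) (eqvSplit h) A).toBlocks₂₁ := by
  ext i j
  show A _ _ = A ((eqvSplit h).symm (Sum.inr i)) ((eqvSplit h).symm (Sum.inl j))
  rw [eqvSplit_symm_inl h hdn, eqvSplit_symm_inr h]

lemma reindex_pow (h : n = d + (n - d)) (A : Matrix (Fin n) (Fin n) R) (k : ℕ) :
    (reindex (eqvSplit h) (eqvSplit h) A) ^ k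
      = reindex (eqvSplit h) (eqvSplit h) (A ^ k) := by
  have h1 : (reindex (eqvSplit h) (eqvSplit h) A)
      = reindexAlgEquiv ℕ R (eqvSplit h) A := rfl
  rw [h1, ← map_pow]
  rfl

lemma smallKalman_eq (h : n = d + (n - d)) (hdn : d ≤ n) (A : Matrix (Fin n) (Fin n) R) :
    smallKalman hdn A = Smat (reindex (eqvSplit h) (eqvSplit h) A) := by
  ext ⟨i, r⟩ j
  show (A ^ ((i : ℕ) + 1)) _ _
    = ((reindex (eqvSplit h) (eqvSplit h) A) ^ ((i : ℕ) + 1)).toBlocks₂₁ r j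
  rw [reindex_pow]
  show (A ^ ((i : ℕ) + 1)) _ _
    = (A ^ ((i : ℕ) + 1)) ((eqvSplit h).symm (Sum.inr r)) ((eqvSplit h).symm (Sum.inl j))
  rw [eqvSplit_symm_inl h hdn, eqvSplit_symm_inr h]

end Transfer

/-- The ideal generated by the `d × d` minors of the small Kalman matrix of the generic matrix
equals the ideal `I_{d,n}` generated by the `d × d` minors of the reduced Kalman matrix:
substituting `A12 = 0`, `A22 = 0` does not change the ideal of maximal minors. -/
theorem stmt17 {K : Type*} [Field K] (n d : ℕ) (hn : 2 ≤ n) (hd1 : 1 ≤ d) (hd2 : d ≤ n - 1) :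
    Ideal.span (Set.range fun r : Fin d → Fin d × Fin (n - d) =>
        ((smallKalman (show d ≤ n by omega) (genMatrix K n)).submatrix r id).det)
      = Ideal.span (Set.range fun r : Fin d → Fin d × Fin (n - d) =>
          ((reducedKalman (blockUL (show d ≤ n by omega) (genMatrix K n))
              (blockLL (show d ≤ n by omega) (genMatrix K n))).submatrix r id).det) := by
  have hdn : d ≤ n := by omega
  have h : n = d + (n - d) := by omega
  rw [smallKalman_eq h hdn, blockUL_eq h hdn, blockLL_eq h hdn]
  exact abstract_span_eq _
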